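/- Let r ≥ 1, n ≥ 1. For every nonempty subset S = {i_1 < i_2 < ⋯ < i_s} of {1,…,r} with s ≤ n, let x_S = t_{i_1}^{n−s+1} t_{i_2} ⋯ t_{i_s} ∈ F_2[t_1,…,t_r]. If coefficients λ_S ∈ F_2 satisfy Σ_S λ_S x_S ∈ J_r, then λ_S = 0 for all S. In other words, the images of the monomials x_S in F_2[t_1,…,t_r]/J_r are linearly independent over F_2. -/
import Mathlib


open MvPolynomial

/-- `J r` is the ideal of `F₂[t 1, …, t r]` generated by the elements
`t i ^ 2 * t j + t i * t j ^ 2` for `1 ≤ i, j ≤ r`. -/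
noncomputable def J (r : ℕ) : Ideal (MvPolynomial (Fin r) (ZMod 2)) :=
  Ideal.span {p | ∃ i j : Fin r, p = X i ^ 2 * X j + X i * X j ^ 2}

/-- For a nonempty subset `S = {i₁ < i₂ < ⋯ < i_s}` of `{1,…,r}`, `xS r n S` is the degree-`n`
monomial `t i₁ ^ (n - s + 1) * t i₂ * ⋯ * t i_s` (and `0` if `S` is empty). -/
noncomputable def xS (r n : ℕ) (S : Finset (Fin r)) : MvPolynomial (Fin r) (ZMod 2) :=
  if h : S.Nonempty then (∏ i ∈ S, X i) * X (S.min' h) ^ (n - S.card) else 0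

/-- The images of the monomials `xS r n S` in `F₂[t 1, …, t r]/J r` are linearly independent
over `F₂`, where `S` ranges over the nonempty subsets of `{1,…,r}` of cardinality at most
`n`: if an `F₂`-linear combination of them lies in `J r`, then all coefficients vanish. -/
theorem stmt_11 (r n : ℕ) (hr : 1 ≤ r) (hn : 1 ≤ n) (lam : Finset (Fin r) → ZMod 2)
    (h : (∑ S ∈ Finset.univ.filter (fun S : Finset (Fin r) => S.Nonempty ∧ S.card ≤ n),
        lam S • xS r n S) ∈ J r) :
    ∀ S : Finset (Fin r), S.Nonempty → S.card ≤ n → lam S = 0 := by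
  -- evaluation at the indicator point of `T` kills `J r`
  have hker : ∀ (T : Finset (Fin r)) (p : MvPolynomial (Fin r) (ZMod 2)), p ∈ J r →
      eval (fun i => if i ∈ T then (1 : ZMod 2) else 0) p = 0 := by
    intro T p hp
    have hle : J r ≤ RingHom.ker (eval (fun i => if i ∈ T then (1 : ZMod 2) else 0)) := by
      rw [J, Ideal.span_le]
      rintro q ⟨i, j, rfl⟩
      simp only [SetLike.mem_coe, RingHom.mem_ker, map_add, map_mul, map_pow, eval_X]
      split_ifs <;> decide
    exact hle hp
  -- value of `xS` at the indicator point
  have hx : ∀ (T S : Finset (Fin r)), S.Nonempty →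
      eval (fun i => if i ∈ T then (1 : ZMod 2) else 0) (xS r n S) =
        if S ⊆ T then 1 else 0 := by
    intro T S hS
    rw [xS, dif_pos hS, map_mul, map_pow, eval_X, map_prod]
    simp only [eval_X]
    rw [Finset.prod_boole]
    by_cases hsub : S ⊆ T
    · rw [if_pos (fun i hi => hsub hi), if_pos (hsub (S.min'_mem hS)), if_pos hsub, one_pow,
        one_mul]
    · rw [if_neg (fun hall => hsub fun i hi => hall i hi), if_neg hsub, zero_mul]
  -- the system of linear equations
  have key : ∀ T : Finset (Fin r),
      ∑ S ∈ Finset.univ.filter (fun S : Finset (Fin r) => S.Nonempty ∧ S.card ≤ n),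
        (if S ⊆ T then lam S else 0) = 0 := by
    intro T
    have h0 := hker T _ h
    rw [map_sum] at h0
    have hcong : ∀ S ∈ Finset.univ.filter
        (fun S : Finset (Fin r) => S.Nonempty ∧ S.card ≤ n),
        eval (fun i => if i ∈ T then (1 : ZMod 2) else 0) (lam S • xS r n S) =
          if S ⊆ T then lam S else 0 := by
      intro S hS
      simp only [Finset.mem_filter, Finset.mem_univ, true_and] at hS
      rw [MvPolynomial.smul_eval, hx T S hS.1, mul_ite, mul_one, mul_zero]
    rw [Finset.sum_congr rfl hcong] at h0
    exact h0
  -- Möbius inversion by strong induction on cardinality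
  suffices H : ∀ k, ∀ S : Finset (Fin r), S.Nonempty → S.card ≤ n → S.card = k → lam S = 0 by
    intro S h1 h2; exact H S.card S h1 h2 rfl
  intro k
  induction k using Nat.strong_induction_on with
  | _ k ih =>
    intro S hSne hScard hk
    have hkey := key S
    rw [← Finset.sum_filter] at hkey
    have hmem : S ∈ (Finset.univ.filter
        (fun S' : Finset (Fin r) => S'.Nonempty ∧ S'.card ≤ n)).filter (fun S' => S' ⊆ S) := by
      simp [hSne, hScard]
    have h0 : ∀ S' ∈ (Finset.univ.filter
        (fun S' : Finset (Fin r) => S'.Nonempty ∧ S'.card ≤ n)).filter (fun S' => S' ⊆ S),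
        S' ≠ S → lam S' = 0 := by
      intro S' hS' hne
      simp only [Finset.mem_filter, Finset.mem_univ, true_and] at hS'
      obtain ⟨⟨hne', hcard'⟩, hsub⟩ := hS'
      have hlt : S'.card < k := by
        rw [← hk]
        exact Finset.card_lt_card (hsub.ssubset_of_ne hne)
      exact ih _ hlt S' hne' hcard' rfl
    have heq := Finset.sum_eq_single_of_mem S hmem h0
    rw [heq] at hkey
    exact hkey
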